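/- Let X be a normed space that is locally totally bounded. A set F ⊆ X is equi-homogeneous if and only if there exist constants M ≥ 1 and δ₁ > 0 such that sup_{x∈F} N(B_δ(x) ∩ F, ρ) ≤ M · inf_{x∈F} N(B_δ(x) ∩ F, ρ) for all δ, ρ with 0 < ρ < δ ≤ δ₁ (i.e. in a locally totally bounded normed space the constants c₁, c₂ in the definition of equi-homogeneity may be taken equal to 1). -/
import Mathlib


open Set Metric Filter Bornology MeasureTheory
open scoped ENNReal NNReal

/-- `coverNumber F δ` : the minimum number of closed `δ`-balls with centres in
`F` needed to cover `F` (`∞` if there is no finite such cover). -/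
noncomputable def coverNumber {X : Type*} [MetricSpace X] (F : Set X) (δ : ℝ) : ℝ≥0∞ :=
  ⨅ (t : Finset X) (_ : (t : Set X) ⊆ F) (_ : F ⊆ ⋃ x ∈ t, closedBall x δ),
    (t.card : ℝ≥0∞)

/-- `F` is equi-homogeneous: for every `δ₀ > 0` there are `M ≥ 1` and
`c₁, c₂ > 0` with
`sup_{x∈F} N(B_δ(x) ∩ F, ρ) ≤ M inf_{x∈F} N(B_{c₁δ}(x) ∩ F, c₂ρ)`
for all `0 < ρ < δ ≤ δ₀`. -/
def EquiHomogeneous {X : Type*} [MetricSpace X] (F : Set X) : Prop :=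
  ∀ δ₀ : ℝ, 0 < δ₀ → ∃ M c₁ c₂ : ℝ, 1 ≤ M ∧ 0 < c₁ ∧ 0 < c₂ ∧
    ∀ δ ρ : ℝ, 0 < ρ → ρ < δ → δ ≤ δ₀ →
      (⨆ x ∈ F, coverNumber (closedBall x δ ∩ F) ρ) ≤
        ENNReal.ofReal M * (⨅ x ∈ F, coverNumber (closedBall x (c₁ * δ) ∩ F) (c₂ * ρ))

section basic
variable {X : Type*} [MetricSpace X]

lemma coverNumber_le_card {F : Set X} {ρ : ℝ} {t : Finset X} (h1 : (t : Set X) ⊆ F)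
    (h2 : F ⊆ ⋃ x ∈ t, closedBall x ρ) : coverNumber F ρ ≤ t.card :=
  iInf_le_of_le t (iInf_le_of_le h1 (iInf_le_of_le h2 le_rfl))

lemma coverNumber_empty (ρ : ℝ) : coverNumber (∅ : Set X) ρ = 0 := by
  have h := coverNumber_le_card (F := (∅ : Set X)) (ρ := ρ) (t := ∅) (by simp) (by simp)
  simpa using h

lemma one_le_coverNumber {F : Set X} (hF : F.Nonempty) (ρ : ℝ) : 1 ≤ coverNumber F ρ := by
  refine le_iInf fun t => le_iInf fun h1 => le_iInf fun h2 => ?_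
  rcases hF with ⟨x, hx⟩
  rcases mem_iUnion₂.1 (h2 hx) with ⟨y, hy, -⟩
  exact_mod_cast Nat.one_le_iff_ne_zero.mpr (Finset.card_ne_zero_of_mem hy)

lemma coverNumber_anti {F : Set X} {ρ ρ' : ℝ} (h : ρ ≤ ρ') :
    coverNumber F ρ' ≤ coverNumber F ρ := by
  refine le_iInf fun t => le_iInf fun h1 => le_iInf fun h2 => coverNumber_le_card h1 ?_
  exact h2.trans (iUnion₂_mono fun y _ => closedBall_subset_closedBall h)

lemma exists_cover (F : Set X) (ρ : ℝ) (h : coverNumber F ρ ≠ ⊤) :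
    ∃ t : Finset X, (t : Set X) ⊆ F ∧ (F ⊆ ⋃ x ∈ t, closedBall x ρ) ∧
      (t.card : ℝ≥0∞) = coverNumber F ρ := by
  have hlt : coverNumber F ρ < ⊤ := h.lt_top
  rw [coverNumber] at hlt
  rw [iInf_lt_iff] at hlt
  obtain ⟨t, ht⟩ := hlt
  rw [iInf_lt_iff] at ht
  obtain ⟨h1, ht⟩ := ht
  rw [iInf_lt_iff] at ht
  obtain ⟨h2, -⟩ := ht
  -- the set of achievable cardinalities
  set S : Set ℕ := {n | ∃ t : Finset X, (t : Set X) ⊆ F ∧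
    (F ⊆ ⋃ x ∈ t, closedBall x ρ) ∧ t.card = n} with hS
  have hSne : S.Nonempty := ⟨t.card, t, h1, h2, rfl⟩
  have hmem : sInf S ∈ S := Nat.sInf_mem hSne
  simp only [hS, Set.mem_setOf_eq] at hmem
  obtain ⟨t₀, ht₀1, ht₀2, ht₀3⟩ := hmem
  refine ⟨t₀, ht₀1, ht₀2, le_antisymm ?_ (coverNumber_le_card ht₀1 ht₀2)⟩
  refine le_iInf fun u => le_iInf fun hu1 => le_iInf fun hu2 => ?_
  rw [ht₀3]
  exact_mod_cast Nat.sInf_le (by exact ⟨u, hu1, hu2, rfl⟩)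

/-- external covers give internal covers at twice the radius -/
lemma coverNumber_le_of_cover {F : Set X} {r : ℝ} {t : Finset X}
    (h : F ⊆ ⋃ x ∈ t, closedBall x r) : coverNumber F (2 * r) ≤ t.card := by
  classical
  set g : X → X := fun z => if h : (closedBall z r ∩ F).Nonempty then h.choose else z with hg
  set t' : Finset X := (t.filter (fun z => (closedBall z r ∩ F).Nonempty)).image g with ht'
  have hsub : (t' : Set X) ⊆ F := by
    intro w hw
    obtain ⟨z, hzmem, rfl⟩ := Finset.mem_image.1 (Finset.mem_coe.1 hw)
    have hz : (closedBall z r ∩ F).Nonempty := (Finset.mem_filter.1 hzmem).2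
    simp only [hg, dif_pos hz]
    exact hz.choose_spec.2
  have hcov : F ⊆ ⋃ x ∈ t', closedBall x (2 * r) := by
    intro x hx
    rcases mem_iUnion₂.1 (h hx) with ⟨z, hz, hxz⟩
    have hne : (closedBall z r ∩ F).Nonempty := ⟨x, hxz, hx⟩
    refine mem_iUnion₂.2 ⟨g z, ?_, ?_⟩
    · exact Finset.mem_image_of_mem g (Finset.mem_filter.2 ⟨hz, hne⟩)
    · have hgz : g z ∈ closedBall z r := by
        simp only [hg, dif_pos hne]; exact hne.choose_spec.1
      have := dist_triangle x z (g z)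
      simp only [mem_closedBall] at *
      calc dist x (g z) ≤ dist x z + dist z (g z) := dist_triangle _ _ _
        _ ≤ r + r := add_le_add hxz (by rwa [dist_comm])
        _ = 2 * r := by ring
  calc coverNumber F (2 * r) ≤ t'.card := coverNumber_le_card hsub hcov
    _ ≤ (t.filter (fun z => (closedBall z r ∩ F).Nonempty)).card := by
        exact_mod_cast Finset.card_image_le
    _ ≤ t.card := by exact_mod_cast Finset.card_filter_le _ _

/-- submultiplicativity -/
lemma coverNumber_submul {E F : Set X} (hEF : E ⊆ F) {s t : ℝ} (hs : 0 ≤ s) :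
    coverNumber E (2 * t) ≤
      coverNumber E s * ⨆ y ∈ F, coverNumber (closedBall y s ∩ F) t := by
  classical
  by_cases hE : E = ∅
  · simp [hE, coverNumber_empty]
  have hEne : E.Nonempty := Set.nonempty_iff_ne_empty.2 hE
  have hFne : F.Nonempty := hEne.mono hEF
  set S : ℝ≥0∞ := ⨆ y ∈ F, coverNumber (closedBall y s ∩ F) t with hSdef
  have hS1 : 1 ≤ S := by
    rcases hFne with ⟨y, hy⟩
    refine le_trans (one_le_coverNumber ⟨y, ?_⟩ t) (le_iSup₂_of_le y hy le_rfl)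
    exact ⟨mem_closedBall_self hs, hy⟩
  by_cases hA : coverNumber E s = ⊤
  · rw [hA, ENNReal.top_mul (by intro h0; rw [h0] at hS1; exact (not_le.2 zero_lt_one) hS1)]
    exact le_top
  by_cases hStop : S = ⊤
  · rw [hStop, ENNReal.mul_top]
    · exact le_top
    · intro h0
      have := one_le_coverNumber hEne s
      rw [h0] at this
      exact (not_le.2 zero_lt_one) this
  obtain ⟨A, hA1, hA2, hA3⟩ := exists_cover E s hA
  -- for each y ∈ A get a cover of closedBall y s ∩ F at radius t
  have hyF : ∀ y ∈ A, (y : X) ∈ F := fun y hy => hEF (hA1 hy)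
  have hcov : ∀ y ∈ A, coverNumber (closedBall y s ∩ F) t ≤ S := fun y hy =>
    le_iSup₂_of_le y (hyF y hy) le_rfl
  have hfin : ∀ y ∈ A, coverNumber (closedBall y s ∩ F) t ≠ ⊤ := fun y hy =>
    fun h => hStop (top_le_iff.1 (h ▸ hcov y hy))
  choose! C hC1 hC2 hC3 using fun y (hy : y ∈ A) => exists_cover (closedBall y s ∩ F) t (hfin y hy)
  set U : Finset X := A.biUnion C with hU
  have hcover : E ⊆ ⋃ z ∈ U, closedBall z t := by
    intro x hx
    rcases mem_iUnion₂.1 (hA2 hx) with ⟨y, hy, hxy⟩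
    have hx2 : x ∈ closedBall y s ∩ F := ⟨hxy, hEF hx⟩
    rcases mem_iUnion₂.1 (hC2 y hy hx2) with ⟨z, hz, hxz⟩
    exact mem_iUnion₂.2 ⟨z, Finset.mem_biUnion.2 ⟨y, hy, hz⟩, hxz⟩
  calc coverNumber E (2 * t) ≤ U.card := coverNumber_le_of_cover (by
        refine hcover.trans (iUnion₂_mono' fun z hz => ⟨z, hz, ?_⟩)
        exact closedBall_subset_closedBall (by linarith [le_refl t]))
    _ ≤ ∑ y ∈ A, ((C y).card : ℝ≥0∞) := by
        rw [← Nat.cast_sum]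
        exact_mod_cast Finset.card_biUnion_le
    _ ≤ ∑ _y ∈ A, S := Finset.sum_le_sum (fun y hy => (hC3 y hy) ▸ hcov y hy)
    _ = A.card * S := by rw [Finset.sum_const, nsmul_eq_mul]
    _ = coverNumber E s * S := by rw [hA3]

end basic

section normed
variable {X : Type*} [NormedAddCommGroup X] [NormedSpace ℝ X]

lemma exists_Kbound (hX : ∀ (x : X) (r : ℝ), TotallyBounded (closedBall x r))
    {c : ℝ} (hc : 0 < c) :
    ∃ K : ℕ, 1 ≤ K ∧ ∀ (F : Set X) (x : X) (δ : ℝ), 0 < δ →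
      coverNumber (closedBall x δ ∩ F) (c * δ) ≤ K := by
  classical
  obtain ⟨t, htfin, htcov⟩ := Metric.totallyBounded_iff.1 (hX 0 1) (c / 4) (by positivity)
  set tf : Finset X := htfin.toFinset with htf
  refine ⟨max tf.card 1, le_max_right _ _, fun F x δ hδ => ?_⟩
  set u : Finset X := tf.image (fun z => x + δ • z) with hu
  have hcov : closedBall x δ ∩ F ⊆ ⋃ z ∈ u, closedBall z (c * δ / 4) := by
    rintro w ⟨hw, -⟩
    have hy : δ⁻¹ • (w - x) ∈ closedBall (0 : X) 1 := by
      rw [mem_closedBall, dist_zero_right, norm_smul, norm_inv, Real.norm_of_nonneg hδ.le]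
      rw [mem_closedBall, dist_eq_norm] at hw
      rw [inv_mul_le_iff₀ hδ]
      linarith
    rcases mem_iUnion₂.1 (htcov hy) with ⟨z, hz, hyz⟩
    refine mem_iUnion₂.2 ⟨x + δ • z, Finset.mem_image_of_mem _ (htfin.mem_toFinset.2 hz), ?_⟩
    rw [mem_closedBall, dist_eq_norm]
    have : w - (x + δ • z) = δ • (δ⁻¹ • (w - x) - z) := by
      rw [smul_sub, smul_inv_smul₀ hδ.ne']
      abel
    rw [this, norm_smul, Real.norm_of_nonneg hδ.le]
    rw [mem_ball, dist_eq_norm] at hyz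
    calc δ * ‖δ⁻¹ • (w - x) - z‖ ≤ δ * (c / 4) := by
          exact mul_le_mul_of_nonneg_left hyz.le hδ.le
      _ = c * δ / 4 := by ring
  have h1 : coverNumber (closedBall x δ ∩ F) (2 * (c * δ / 4)) ≤ u.card :=
    coverNumber_le_of_cover hcov
  calc coverNumber (closedBall x δ ∩ F) (c * δ)
      ≤ coverNumber (closedBall x δ ∩ F) (2 * (c * δ / 4)) :=
        coverNumber_anti (by nlinarith)
    _ ≤ u.card := h1
    _ ≤ ((max tf.card 1 : ℕ) : ℝ≥0∞) := by
        exact_mod_cast le_trans Finset.card_image_le (le_max_left _ _)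

end normed

/-- In a locally totally bounded normed space, `F` is
equi-homogeneous iff the equi-homogeneity inequality holds with
`c₁ = c₂ = 1` for some `δ₁ > 0`. -/
theorem equiHomogeneous_iff_of_normedSpace {X : Type*} [NormedAddCommGroup X]
    [NormedSpace ℝ X]
    (hX : ∀ (x : X) (r : ℝ), TotallyBounded (closedBall x r)) (F : Set X) :
    EquiHomogeneous F ↔
      ∃ M δ₁ : ℝ, 1 ≤ M ∧ 0 < δ₁ ∧
        ∀ δ ρ : ℝ, 0 < ρ → ρ < δ → δ ≤ δ₁ →
          (⨆ x ∈ F, coverNumber (closedBall x δ ∩ F) ρ) ≤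
            ENNReal.ofReal M * (⨅ x ∈ F, coverNumber (closedBall x δ ∩ F) ρ) := by
  constructor
  · intro hEH
    obtain ⟨M, c₁, c₂, hM, hc₁, hc₂, H⟩ := hEH 1 one_pos
    obtain ⟨K₀, hK₀1, hK₀⟩ := exists_Kbound hX (c := 2 / c₁) (by positivity)
    obtain ⟨K₁, hK₁1, hK₁⟩ := exists_Kbound hX (c := 1 / c₁) (by positivity)
    obtain ⟨K₂, hK₂1, hK₂⟩ := exists_Kbound hX (c := c₂ / 4) (by positivity)
    refine ⟨(K₀ : ℝ) + M * K₁ * K₂, min 1 c₁, ?_, lt_min one_pos hc₁, ?_⟩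
    · have h0 : (1 : ℝ) ≤ K₀ := by exact_mod_cast hK₀1
      have h1 : (1 : ℝ) ≤ K₁ := by exact_mod_cast hK₁1
      have h2 : (1 : ℝ) ≤ K₂ := by exact_mod_cast hK₂1
      nlinarith [mul_le_mul (le_trans hM (le_mul_of_one_le_right (by linarith) h1)) h2 zero_le_one (by nlinarith)]
    intro δ ρ hρ hρδ hδ
    have hδpos : 0 < δ := hρ.trans hρδ
    have hδc : δ ≤ c₁ := hδ.trans (min_le_right _ _)
    rcases Set.eq_empty_or_nonempty F with hF | hFne
    · simp [hF]
    have hinf1 : 1 ≤ ⨅ x ∈ F, coverNumber (closedBall x δ ∩ F) ρ :=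
      by
      refine le_iInf fun x => le_iInf fun hx => one_le_coverNumber ?_ ρ
      exact ⟨x, mem_closedBall_self hδpos.le, hx⟩
    have hofM' : ENNReal.ofReal ((K₀ : ℝ) + M * K₁ * K₂)
        = (K₀ : ℝ≥0∞) + ENNReal.ofReal (M * K₁ * K₂) := by
      rw [ENNReal.ofReal_add (by positivity) (by positivity), ENNReal.ofReal_natCast]
    by_cases hcase : ρ / 2 < δ / c₁
    · -- main case
      have hδ'le1 : δ / c₁ ≤ 1 := (div_le_one hc₁).mpr hδc
      have hstep3 := H (δ / c₁) (ρ / 2) (half_pos hρ) hcase hδ'le1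
      rw [show c₁ * (δ / c₁) = δ from by field_simp] at hstep3
      have hK2sup : (⨆ z ∈ F, coverNumber (closedBall z ρ ∩ F) (c₂ / 4 * ρ)) ≤ (K₂ : ℝ≥0∞) :=
        iSup₂_le fun z _ => hK₂ F z ρ hρ
      have hstep4 : ∀ y : X, coverNumber (closedBall y δ ∩ F) (c₂ * (ρ / 2)) ≤
          coverNumber (closedBall y δ ∩ F) ρ * K₂ := fun y => by
        have h := coverNumber_submul (E := closedBall y δ ∩ F) (F := F)
          inter_subset_right (s := ρ) (t := c₂ / 4 * ρ) hρ.le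
        rw [show 2 * (c₂ / 4 * ρ) = c₂ * (ρ / 2) from by ring] at h
        exact h.trans (mul_le_mul' le_rfl hK2sup)
      have hK₂0 : (K₂ : ℝ≥0∞) ≠ 0 := Nat.cast_ne_zero.2 (by omega)
      have hdist : (K₂ : ℝ≥0∞) * ⨅ y ∈ F, coverNumber (closedBall y δ ∩ F) ρ
          = ⨅ y ∈ F, (K₂ : ℝ≥0∞) * coverNumber (closedBall y δ ∩ F) ρ := by
        rw [ENNReal.mul_iInf_of_ne hK₂0 (ENNReal.natCast_ne_top _)]
        exact iInf_congr fun y => ENNReal.mul_iInf_of_ne hK₂0 (ENNReal.natCast_ne_top _)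
      have hinfstep : (⨅ y ∈ F, coverNumber (closedBall y δ ∩ F) (c₂ * (ρ / 2)))
          ≤ (K₂ : ℝ≥0∞) * ⨅ y ∈ F, coverNumber (closedBall y δ ∩ F) ρ := by
        rw [hdist]
        exact iInf₂_mono fun y hy => (hstep4 y).trans_eq (mul_comm _ _)
      have hcoef : (K₁ : ℝ≥0∞) * (ENNReal.ofReal M * (K₂ : ℝ≥0∞))
          ≤ ENNReal.ofReal ((K₀ : ℝ) + M * K₁ * K₂) := by
        have heq : (K₁ : ℝ≥0∞) * (ENNReal.ofReal M * (K₂ : ℝ≥0∞))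
            = ENNReal.ofReal (M * K₁ * K₂) := by
          rw [← ENNReal.ofReal_natCast K₁, ← ENNReal.ofReal_natCast K₂,
            ← ENNReal.ofReal_mul (by positivity), ← ENNReal.ofReal_mul (by positivity)]
          congr 1; ring
        rw [heq, hofM']
        exact le_add_self
      refine iSup₂_le fun x hx => ?_
      have h1 : coverNumber (closedBall x δ ∩ F) ρ ≤
          coverNumber (closedBall x δ ∩ F) (δ / c₁) *
            ⨆ y ∈ F, coverNumber (closedBall y (δ / c₁) ∩ F) (ρ / 2) := by
        have h := coverNumber_submul (E := closedBall x δ ∩ F) (F := F)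
          inter_subset_right (s := δ / c₁) (t := ρ / 2) (by positivity)
        rwa [show 2 * (ρ / 2) = ρ from by ring] at h
      have h2 : coverNumber (closedBall x δ ∩ F) (δ / c₁) ≤ (K₁ : ℝ≥0∞) := by
        have h := hK₁ F x δ hδpos
        rwa [show 1 / c₁ * δ = δ / c₁ from by ring] at h
      calc coverNumber (closedBall x δ ∩ F) ρ
          ≤ coverNumber (closedBall x δ ∩ F) (δ / c₁) *
            ⨆ y ∈ F, coverNumber (closedBall y (δ / c₁) ∩ F) (ρ / 2) := h1
        _ ≤ (K₁ : ℝ≥0∞) * (ENNReal.ofReal M *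
            ⨅ y ∈ F, coverNumber (closedBall y δ ∩ F) (c₂ * (ρ / 2))) :=
              mul_le_mul' h2 hstep3
        _ ≤ (K₁ : ℝ≥0∞) * (ENNReal.ofReal M *
            ((K₂ : ℝ≥0∞) * ⨅ y ∈ F, coverNumber (closedBall y δ ∩ F) ρ)) :=
              mul_le_mul' le_rfl (mul_le_mul' le_rfl hinfstep)
        _ = (K₁ : ℝ≥0∞) * (ENNReal.ofReal M * (K₂ : ℝ≥0∞)) *
            ⨅ y ∈ F, coverNumber (closedBall y δ ∩ F) ρ := by ring
        _ ≤ ENNReal.ofReal ((K₀ : ℝ) + M * K₁ * K₂) *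
            ⨅ y ∈ F, coverNumber (closedBall y δ ∩ F) ρ := mul_le_mul_left hcoef _
    · -- trivial case : ρ ≥ 2δ/c₁
      push_neg at hcase
      have hρbig : 2 / c₁ * δ ≤ ρ := by
        calc 2 / c₁ * δ = 2 * (δ / c₁) := by ring
          _ ≤ 2 * (ρ / 2) := by linarith
          _ = ρ := by ring
      refine iSup₂_le fun x hx => ?_
      calc coverNumber (closedBall x δ ∩ F) ρ
          ≤ coverNumber (closedBall x δ ∩ F) (2 / c₁ * δ) := coverNumber_anti hρbig
        _ ≤ (K₀ : ℝ≥0∞) := hK₀ F x δ hδpos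
        _ = (K₀ : ℝ≥0∞) * 1 := (mul_one _).symm
        _ ≤ ENNReal.ofReal ((K₀ : ℝ) + M * K₁ * K₂) *
            ⨅ y ∈ F, coverNumber (closedBall y δ ∩ F) ρ := by
              refine mul_le_mul' ?_ hinf1
              rw [hofM']
              exact le_self_add
  · rintro ⟨M, δ₁, hM, hδ₁, H⟩
    intro δ₀ hδ₀
    set c : ℝ := min 1 (δ₁ / δ₀) with hcdef
    have hc : 0 < c := lt_min one_pos (by positivity)
    have hc1 : c ≤ 1 := min_le_left _ _
    obtain ⟨K, hK1, hK⟩ := exists_Kbound hX hc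
    refine ⟨K * M, c, c / 2, ?_, hc, by positivity, ?_⟩
    · have hK1' : (1 : ℝ) ≤ K := by exact_mod_cast hK1
      nlinarith
    intro δ ρ hρ hρδ hδ
    have hδpos : 0 < δ := hρ.trans hρδ
    have hcδ : c * δ ≤ δ₁ := by
      calc c * δ ≤ (δ₁ / δ₀) * δ := by
            exact mul_le_mul_of_nonneg_right (min_le_right _ _) hδpos.le
        _ ≤ (δ₁ / δ₀) * δ₀ := by
            exact mul_le_mul_of_nonneg_left hδ (by positivity)
        _ = δ₁ := by field_simp
    have hstep3 := H (c * δ) (c * ρ / 2) (by positivity) (by nlinarith) hcδ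
    have hofR : ENNReal.ofReal (K * M) = (K : ℝ≥0∞) * ENNReal.ofReal M := by
      rw [ENNReal.ofReal_mul (by positivity), ENNReal.ofReal_natCast]
    rw [hofR, mul_assoc]
    refine iSup₂_le fun x hx => ?_
    have h1 : coverNumber (closedBall x δ ∩ F) ρ ≤ coverNumber (closedBall x δ ∩ F) (c * ρ) :=
      coverNumber_anti (by nlinarith)
    have h2 : coverNumber (closedBall x δ ∩ F) (c * ρ) ≤
        coverNumber (closedBall x δ ∩ F) (c * δ) *
          ⨆ y ∈ F, coverNumber (closedBall y (c * δ) ∩ F) (c * ρ / 2) := by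
      have := coverNumber_submul (E := closedBall x δ ∩ F) (F := F)
        inter_subset_right (s := c * δ) (t := c * ρ / 2) (by positivity)
      rwa [show 2 * (c * ρ / 2) = c * ρ by ring] at this
    have h3 : coverNumber (closedBall x δ ∩ F) (c * δ) ≤ K := hK F x δ hδpos
    have heq : ∀ y : X, c * ρ / 2 = c / 2 * ρ := fun _ => by ring
    calc coverNumber (closedBall x δ ∩ F) ρ
        ≤ coverNumber (closedBall x δ ∩ F) (c * δ) *
          ⨆ y ∈ F, coverNumber (closedBall y (c * δ) ∩ F) (c * ρ / 2) := h1.trans h2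
      _ ≤ (K : ℝ≥0∞) * (ENNReal.ofReal M *
          ⨅ y ∈ F, coverNumber (closedBall y (c * δ) ∩ F) (c * ρ / 2)) :=
            mul_le_mul' h3 hstep3
      _ = (K : ℝ≥0∞) * (ENNReal.ofReal M *
          ⨅ y ∈ F, coverNumber (closedBall y (c * δ) ∩ F) (c / 2 * ρ)) := by
            rw [show c * ρ / 2 = c / 2 * ρ by ring]
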